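/- One-dimensionality of the deficiency space on a bounded interval for |α| ≥ 1/2 (core of Proposition 3.4(i)): Let α ∈ ℝ with |α| ≥ 1/2 and let b ∈ (0,∞). Consider the set S of continuously differentiable functions f = (f₁,f₂) : (0,b) → ℂ² with ∫₀^b |f(x)|²_{ℂ²} dx < ∞ satisfying f₂'(x) + (α/x) f₂(x) = i f₁(x) and −f₁'(x) + (α/x) f₁(x) = i f₂(x) for all x ∈ (0,b). Then S is a one-dimensional complex vector space: S contains a nonzero element, and any two elements of S are linearly dependent over ℂ. -/

import Mathlib

open MeasureTheory Real Set

noncomputable section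

/-- Membership in the deficiency space `S = ker(T_α − i)` of the maximal operator associated
with `τ_α` on `L²((0,b); ℂ²)`: `f = (f₁,f₂)` is continuously differentiable on `(0,b)`,
square-integrable on `(0,b)`, and solves `τ_α f = i f` there. -/
def MemDeficiency (α b : ℝ) (f₁ f₂ : ℝ → ℂ) : Prop :=
  ContDiffOn ℝ 1 f₁ (Ioo 0 b) ∧ ContDiffOn ℝ 1 f₂ (Ioo 0 b)
    ∧ IntegrableOn (fun x => ‖f₁ x‖ ^ 2 + ‖f₂ x‖ ^ 2) (Ioo 0 b)
    ∧ ∀ x ∈ Ioo (0 : ℝ) b,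
        deriv f₂ x + ((α / x : ℝ) : ℂ) * f₂ x = Complex.I * f₁ x
        ∧ -deriv f₁ x + ((α / x : ℝ) : ℂ) * f₁ x = Complex.I * f₂ x

namespace DefAux

lemma summable_ps (c : ℕ → ℝ) (hc : ∀ n, |c n| ≤ 1 / n.factorial) (t : ℝ) :
    Summable (fun n => c n * t ^ n) := by
  refine Summable.of_norm_bounded (Real.summable_pow_div_factorial |t|) fun n => ?_
  rw [norm_mul, norm_pow, Real.norm_eq_abs, Real.norm_eq_abs]
  calc |c n| * |t| ^ n ≤ (1 / n.factorial) * |t| ^ n := by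
        apply mul_le_mul_of_nonneg_right (hc n) (pow_nonneg (abs_nonneg t) n)
    _ = |t| ^ n / n.factorial := by ring

lemma shift_bound (c : ℕ → ℝ) (hc : ∀ n, |c n| ≤ 1 / n.factorial) (n : ℕ) :
    |((n : ℝ) + 1) * c (n + 1)| ≤ 1 / n.factorial := by
  rw [abs_mul]
  have h1 : |((n : ℝ) + 1)| = (n : ℝ) + 1 := abs_of_pos (by positivity)
  rw [h1]
  have := hc (n + 1)
  have hfac : ((n + 1).factorial : ℝ) = ((n : ℝ) + 1) * n.factorial := by
    rw [Nat.factorial_succ]; push_cast; ring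
  calc ((n : ℝ) + 1) * |c (n + 1)| ≤ ((n : ℝ) + 1) * (1 / (n + 1).factorial) := by
        apply mul_le_mul_of_nonneg_left this (by positivity)
    _ = 1 / n.factorial := by
        rw [hfac]; field_simp

lemma hasDerivAt_ps (c : ℕ → ℝ) (hc : ∀ n, |c n| ≤ 1 / n.factorial) (t : ℝ) :
    HasDerivAt (fun y : ℝ => ∑' n, c n * y ^ n)
      (∑' n : ℕ, ((n : ℝ) + 1) * c (n + 1) * t ^ n) t := by
  set R : ℝ := |t| + 1 with hR
  have hR1 : (1 : ℝ) ≤ R := by have := abs_nonneg t; linarith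
  have hRpos : (0 : ℝ) < R := by linarith
  have hbound : ∀ n : ℕ, ∀ y : ℝ, y ∈ Metric.ball (0 : ℝ) R →
      ‖c n * ((n : ℝ) * y ^ (n - 1))‖ ≤ (2 * R) ^ n / n.factorial := by
    intro n y hy
    have hyR : |y| ≤ R := by
      rw [Metric.mem_ball, dist_zero_right, Real.norm_eq_abs] at hy; linarith
    rw [Real.norm_eq_abs, abs_mul, abs_mul]
    have h1 : |c n| ≤ 1 / n.factorial := hc n
    have h2 : |(n : ℝ)| ≤ 2 ^ n := by
      rw [abs_of_nonneg (Nat.cast_nonneg n)]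
      exact_mod_cast (Nat.lt_two_pow_self (n := n)).le
    have h3 : |y| ^ (n - 1) ≤ R ^ n := by
      calc |y| ^ (n - 1) ≤ R ^ (n - 1) := pow_le_pow_left₀ (abs_nonneg y) hyR _
        _ ≤ R ^ n := pow_le_pow_right₀ hR1 (Nat.sub_le n 1)
    rw [abs_pow]
    calc |c n| * (|(n : ℝ)| * |y| ^ (n - 1))
        ≤ (1 / n.factorial) * (2 ^ n * R ^ n) := by
          apply mul_le_mul h1 (mul_le_mul h2 h3 (by positivity) (by positivity))
            (by positivity) (by positivity)
      _ = (2 * R) ^ n / n.factorial := by rw [mul_pow]; ring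
  have hsum0 : Summable fun n => c n * (0 : ℝ) ^ n := summable_ps c hc 0
  have key := hasDerivAt_tsum_of_isPreconnected
    (Real.summable_pow_div_factorial (2 * R)) Metric.isOpen_ball
    (convex_ball (0:ℝ) R).isPreconnected
    (g := fun n y => c n * y ^ n) (g' := fun n y => c n * ((n : ℝ) * y ^ (n - 1)))
    (fun n y _ => (hasDerivAt_pow n y).const_mul (c n)) hbound
    (Metric.mem_ball_self hRpos) hsum0
    (by rw [Metric.mem_ball, dist_zero_right, Real.norm_eq_abs]; linarith)
  refine key.congr_deriv ?_
  have hsumd : Summable fun n => c n * ((n : ℝ) * t ^ (n - 1)) := by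
    refine Summable.of_norm_bounded (Real.summable_pow_div_factorial (2 * R)) fun n => ?_
    exact hbound n t (by rw [Metric.mem_ball, dist_zero_right, Real.norm_eq_abs]; linarith)
  rw [hsumd.tsum_eq_zero_add]
  simp only [Nat.cast_zero, zero_mul, mul_zero, zero_add]
  exact tsum_congr fun n => by push_cast; ring

/-- coefficients of the regular solution series -/
def aa (α : ℝ) : ℕ → ℝ
  | 0 => 1
  | n + 1 => aa α n / ((2 * n + 2) * (2 * α + 2 * n + 1))

variable {α : ℝ}

lemma den_pos (hα : 1 / 2 ≤ α) (n : ℕ) : (0:ℝ) < (2 * n + 2) * (2 * α + 2 * n + 1) := by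
  have h1 : (0:ℝ) < 2 * n + 2 := by positivity
  have h2 : (0:ℝ) < 2 * α + 2 * n + 1 := by
    have : (0:ℝ) ≤ (n:ℝ) := Nat.cast_nonneg n
    linarith
  exact mul_pos h1 h2

lemma aa_pos (hα : 1 / 2 ≤ α) (n : ℕ) : 0 < aa α n := by
  induction n with
  | zero => norm_num [aa]
  | succ n ih => exact div_pos ih (den_pos hα n)

lemma aa_rec (hα : 1 / 2 ≤ α) (n : ℕ) :
    aa α (n + 1) * ((2 * n + 2) * (2 * α + 2 * n + 1)) = aa α n := by
  rw [aa]; field_simp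

lemma aa_le (hα : 1 / 2 ≤ α) (n : ℕ) : aa α n ≤ 1 / n.factorial := by
  induction n with
  | zero => norm_num [aa]
  | succ n ih =>
    have hden : ((n:ℝ) + 1) * 2 ≤ (2 * n + 2) * (2 * α + 2 * n + 1) := by
      have h2 : (2:ℝ) ≤ 2 * α + 2 * n + 1 := by
        have : (0:ℝ) ≤ (n:ℝ) := Nat.cast_nonneg n
        linarith
      have h1 : (0:ℝ) < 2 * n + 2 := by positivity
      nlinarith
    have hpos := aa_pos hα n
    have hfac : ((n + 1).factorial : ℝ) = ((n : ℝ) + 1) * n.factorial := by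
      rw [Nat.factorial_succ]; push_cast; ring
    rw [aa, hfac]
    have hdpos := den_pos hα n
    rw [div_le_div_iff₀ hdpos (by positivity)]
    calc aa α n * (((n:ℝ) + 1) * n.factorial) ≤ (1 / n.factorial) * (((n:ℝ)+1) * n.factorial) := by
          apply mul_le_mul_of_nonneg_right ih (by positivity)
      _ = (n:ℝ) + 1 := by
          have : (n.factorial : ℝ) ≠ 0 := by positivity
          field_simp
      _ ≤ 1 * ((2 * n + 2) * (2 * α + 2 * n + 1)) / 2 := by
          rw [one_mul, le_div_iff₀ (by norm_num : (0:ℝ) < 2)]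
          calc ((n:ℝ) + 1) * 2 ≤ (2 * n + 2) * (2 * α + 2 * n + 1) := hden
            _ ≤ _ := le_rfl
      _ ≤ 1 * ((2 * n + 2) * (2 * α + 2 * n + 1)) := by
          have := den_pos hα n; linarith

lemma aa_abs_le (hα : 1 / 2 ≤ α) (n : ℕ) : |aa α n| ≤ 1 / n.factorial := by
  rw [abs_of_pos (aa_pos hα n)]; exact aa_le hα n

/-- coefficients of the second-component series -/
def hh (α : ℝ) (n : ℕ) : ℝ := aa α n / (2 * α + 2 * n + 1)

lemma hh_den_pos (hα : 1 / 2 ≤ α) (n : ℕ) : (0:ℝ) < 2 * α + 2 * n + 1 := by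
  have : (0:ℝ) ≤ (n:ℝ) := Nat.cast_nonneg n
  linarith

lemma hh_pos (hα : 1 / 2 ≤ α) (n : ℕ) : 0 < hh α n :=
  div_pos (aa_pos hα n) (hh_den_pos hα n)

lemma hh_eq (hα : 1 / 2 ≤ α) (n : ℕ) : hh α n = 2 * ((n:ℝ) + 1) * aa α (n + 1) := by
  have h := aa_rec hα n
  have h1 : (0:ℝ) < 2 * α + 2 * n + 1 := hh_den_pos hα n
  rw [hh]
  field_simp
  nlinarith [h]

lemma hh_abs_le (hα : 1 / 2 ≤ α) (n : ℕ) : |hh α n| ≤ 1 / n.factorial := by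
  rw [abs_of_pos (hh_pos hα n), hh]
  have h1 : (1:ℝ) ≤ 2 * α + 2 * n + 1 := by
    have : (0:ℝ) ≤ (n:ℝ) := Nat.cast_nonneg n
    linarith
  calc aa α n / (2 * α + 2 * n + 1) ≤ aa α n / 1 :=
        div_le_div_of_nonneg_left (aa_pos hα n).le ?_ h1
    _ = aa α n := div_one _
    _ ≤ 1 / n.factorial := aa_le hα n
  · norm_num

lemma hh_rec (hα : 1 / 2 ≤ α) (n : ℕ) :
    (2 * α + 2 * (n:ℝ) + 3) * hh α (n + 1) = aa α (n + 1) := by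
  have h1 : (0:ℝ) < 2 * α + 2 * ((n:ℕ)+1 : ℕ) + 1 := hh_den_pos hα (n+1)
  rw [hh]
  push_cast at h1 ⊢
  field_simp
  ring

/-- `G t = ∑ aa n t^n` -/
def G (α : ℝ) (t : ℝ) : ℝ := ∑' n : ℕ, aa α n * t ^ n

/-- `H t = ∑ hh n t^n` -/
def H (α : ℝ) (t : ℝ) : ℝ := ∑' n : ℕ, hh α n * t ^ n

/-- derivative series of `H` -/
def HD (α : ℝ) (t : ℝ) : ℝ := ∑' n : ℕ, ((n:ℝ) + 1) * hh α (n + 1) * t ^ n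

lemma summable_G (hα : 1 / 2 ≤ α) (t : ℝ) : Summable (fun n => aa α n * t ^ n) :=
  summable_ps _ (aa_abs_le hα) t

lemma summable_H (hα : 1 / 2 ≤ α) (t : ℝ) : Summable (fun n => hh α n * t ^ n) :=
  summable_ps _ (hh_abs_le hα) t

lemma hasDerivAt_G (hα : 1 / 2 ≤ α) (t : ℝ) : HasDerivAt (G α) (H α t / 2) t := by
  have h := hasDerivAt_ps _ (aa_abs_le hα) t
  have heq : H α t / 2 = ∑' n : ℕ, ((n:ℝ) + 1) * aa α (n + 1) * t ^ n := by
    rw [H]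
    have : ∀ n : ℕ, hh α n * t ^ n = 2 * (((n:ℝ) + 1) * aa α (n + 1) * t ^ n) := by
      intro n; rw [hh_eq hα n]; ring
    rw [tsum_congr this, tsum_mul_left]
    ring
  rw [heq]
  exact h

lemma hasDerivAt_H (hα : 1 / 2 ≤ α) (t : ℝ) : HasDerivAt (H α) (HD α t) t :=
  hasDerivAt_ps _ (hh_abs_le hα) t

set_option maxHeartbeats 1600000 in
lemma H_identity (hα : 1 / 2 ≤ α) (t : ℝ) :
    (2 * α + 1) * H α t + 2 * t * HD α t = G α t := by
  have hc : ∀ n : ℕ, |((n:ℝ) + 1) * hh α (n + 1)| ≤ 1 / n.factorial :=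
    shift_bound _ (hh_abs_le hα)
  have S1 : Summable (fun n => hh α n * t ^ n) := summable_H hα t
  have S1' : Summable (fun n : ℕ => hh α (n + 1) * t ^ (n + 1)) :=
    (summable_nat_add_iff 1).mpr S1
  have S2 : Summable (fun n : ℕ => ((n:ℝ) + 1) * hh α (n + 1) * t ^ n) :=
    summable_ps _ hc t
  have SG : Summable (fun n => aa α n * t ^ n) := summable_G hα t
  -- expand G
  have hG : G α t = 1 + ∑' n : ℕ, aa α (n + 1) * t ^ (n + 1) := by
    rw [G, SG.tsum_eq_zero_add]
    norm_num [aa]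
  -- expand H
  have hH : (2 * α + 1) * H α t
      = 1 + ∑' n : ℕ, (2 * α + 1) * (hh α (n + 1) * t ^ (n + 1)) := by
    rw [H, S1.tsum_eq_zero_add, mul_add, ← tsum_mul_left]
    have hne : (2 * α + 1) ≠ 0 := by positivity
    have h0 : (2 * α + 1) * (hh α 0 * t ^ 0) = 1 := by
      have e1 : hh α 0 = 1 / (2 * α + 1) := by
        rw [hh]; norm_num [aa]
      rw [e1, pow_zero, mul_one, mul_one_div, div_self hne]
    rw [h0]
  -- expand 2t·HD
  have hHD : 2 * t * HD α t = ∑' n : ℕ, 2 * (((n:ℝ) + 1) * hh α (n + 1) * t ^ (n + 1)) := by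
    rw [HD, ← tsum_mul_left]
    exact tsum_congr fun n => by ring
  rw [hH, hHD, hG]
  have S3 : Summable (fun n : ℕ => (2 * α + 1) * (hh α (n + 1) * t ^ (n + 1))) :=
    S1'.mul_left _
  have S4 : Summable (fun n : ℕ => 2 * (((n:ℝ) + 1) * hh α (n + 1) * t ^ (n + 1))) := by
    have : Summable (fun n : ℕ => ((n:ℝ) + 1) * hh α (n + 1) * t ^ (n + 1)) := by
      have := (summable_ps _ hc t).mul_left t
      refine this.congr fun n => ?_
      ring
    exact this.mul_left 2
  rw [add_assoc, ← S3.tsum_add S4]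
  congr 1
  refine tsum_congr fun n => ?_
  have h := hh_rec hα n
  linear_combination t ^ (n + 1) * h

lemma G_ge_one (hα : 1 / 2 ≤ α) {t : ℝ} (ht : 0 ≤ t) : 1 ≤ G α t := by
  have h := (summable_G hα t).le_tsum 0
    (fun n _ => mul_nonneg (aa_pos hα n).le (pow_nonneg ht n))
  simpa [aa, G] using h

lemma G_pos (hα : 1 / 2 ≤ α) {t : ℝ} (ht : 0 ≤ t) : 0 < G α t :=
  lt_of_lt_of_le one_pos (G_ge_one hα ht)

lemma H_nonneg (hα : 1 / 2 ≤ α) {t : ℝ} (ht : 0 ≤ t) : 0 ≤ H α t :=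
  tsum_nonneg fun n => mul_nonneg (hh_pos hα n).le (pow_nonneg ht n)

lemma G_mono (hα : 1 / 2 ≤ α) {t T : ℝ} (ht : 0 ≤ t) (htT : t ≤ T) : G α t ≤ G α T :=
  Summable.tsum_le_tsum (fun n => mul_le_mul_of_nonneg_left
    (pow_le_pow_left₀ ht htT n) (aa_pos hα n).le) (summable_G hα t) (summable_G hα T)

lemma H_mono (hα : 1 / 2 ≤ α) {t T : ℝ} (ht : 0 ≤ t) (htT : t ≤ T) : H α t ≤ H α T :=
  Summable.tsum_le_tsum (fun n => mul_le_mul_of_nonneg_left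
    (pow_le_pow_left₀ ht htT n) (hh_pos hα n).le) (summable_H hα t) (summable_H hα T)

lemma contDiff_G (hα : 1 / 2 ≤ α) : ContDiff ℝ 1 (G α) := by
  rw [contDiff_one_iff_deriv]
  refine ⟨fun t => (hasDerivAt_G hα t).differentiableAt, ?_⟩
  have hd : deriv (G α) = fun t => H α t / 2 := funext fun t => (hasDerivAt_G hα t).deriv
  rw [hd]
  exact (Differentiable.continuous (fun t => (hasDerivAt_H hα t).differentiableAt)).div_const 2

lemma contDiff_H (hα : 1 / 2 ≤ α) : ContDiff ℝ 1 (H α) := by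
  rw [contDiff_one_iff_deriv]
  refine ⟨fun t => (hasDerivAt_H hα t).differentiableAt, ?_⟩
  have hd : deriv (H α) = fun t => HD α t := funext fun t => (hasDerivAt_H hα t).deriv
  rw [hd]
  have hc : ∀ n : ℕ, |((n:ℝ) + 1) * hh α (n + 1)| ≤ 1 / n.factorial :=
    shift_bound _ (hh_abs_le hα)
  have : ∀ t, HasDerivAt (HD α)
      (∑' n : ℕ, ((n:ℝ) + 1) * (((n:ℝ) + 1 + 1) * hh α (n + 1 + 1)) * t ^ n) t := by
    intro t
    have h := hasDerivAt_ps _ hc t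
    refine h.congr_deriv ?_
    exact tsum_congr fun n => by push_cast; ring
  exact Differentiable.continuous (fun t => (this t).differentiableAt)

def F1 (α : ℝ) (x : ℝ) : ℂ := ((x ^ α * G α (x ^ 2) : ℝ) : ℂ)
def F2 (α : ℝ) (x : ℝ) : ℂ := Complex.I * ((x ^ (α + 1) * H α (x ^ 2) : ℝ) : ℂ)

lemma hasDerivAt_F1re (hα : 1 / 2 ≤ α) {x : ℝ} (hx : 0 < x) :
    HasDerivAt (fun y : ℝ => y ^ α * G α (y ^ 2))
      (α * x ^ (α - 1) * G α (x ^ 2) + x ^ (α + 1) * H α (x ^ 2)) x := by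
  have h1 : HasDerivAt (fun y : ℝ => y ^ α) (α * x ^ (α - 1)) x :=
    Real.hasDerivAt_rpow_const (Or.inl hx.ne')
  have hsq : HasDerivAt (fun y : ℝ => y ^ 2) (2 * x) x := by
    simpa using hasDerivAt_pow 2 x
  have h2 : HasDerivAt (fun y : ℝ => G α (y ^ 2)) (H α (x ^ 2) / 2 * (2 * x)) x :=
    by have := (hasDerivAt_G hα (x ^ 2)).comp x hsq; exact this
  have h3 := h1.mul h2
  refine h3.congr_deriv ?_
  rw [Real.rpow_add_one hx.ne']
  ring

lemma hasDerivAt_F2re (hα : 1 / 2 ≤ α) {x : ℝ} (hx : 0 < x) :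
    HasDerivAt (fun y : ℝ => y ^ (α + 1) * H α (y ^ 2))
      ((α + 1) * x ^ α * H α (x ^ 2) + 2 * x ^ (α + 2) * HD α (x ^ 2)) x := by
  have h1 : HasDerivAt (fun y : ℝ => y ^ (α + 1)) ((α + 1) * x ^ (α + 1 - 1)) x :=
    Real.hasDerivAt_rpow_const (Or.inl hx.ne')
  have hsq : HasDerivAt (fun y : ℝ => y ^ 2) (2 * x) x := by
    simpa using hasDerivAt_pow 2 x
  have h2 : HasDerivAt (fun y : ℝ => H α (y ^ 2)) (HD α (x ^ 2) * (2 * x)) x :=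
    by have := (hasDerivAt_H hα (x ^ 2)).comp x hsq; exact this
  have h3 := h1.mul h2
  refine h3.congr_deriv ?_
  have e1 : α + 1 - 1 = α := by ring
  have e2 : x ^ (α + 2) = x ^ (α + 1) * x := by
    rw [← Real.rpow_add_one hx.ne']; ring_nf
  rw [e1, e2]
  ring

lemma hasDerivAt_F1 (hα : 1 / 2 ≤ α) {x : ℝ} (hx : 0 < x) :
    HasDerivAt (F1 α)
      (((α * x ^ (α - 1) * G α (x ^ 2) + x ^ (α + 1) * H α (x ^ 2) : ℝ)) : ℂ) x :=
  (hasDerivAt_F1re hα hx).ofReal_comp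

lemma hasDerivAt_F2 (hα : 1 / 2 ≤ α) {x : ℝ} (hx : 0 < x) :
    HasDerivAt (F2 α)
      (Complex.I * (((α + 1) * x ^ α * H α (x ^ 2) + 2 * x ^ (α + 2) * HD α (x ^ 2) : ℝ) : ℂ)) x := by
  have := ((hasDerivAt_F2re hα hx).ofReal_comp).const_mul Complex.I
  exact this

lemma F1_ne_zero (hα : 1 / 2 ≤ α) {x : ℝ} (hx : 0 < x) : F1 α x ≠ 0 := by
  have h1 : (0:ℝ) < x ^ α := Real.rpow_pos_of_pos hx α
  have h2 : (0:ℝ) < G α (x ^ 2) := G_pos hα (by positivity)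
  simp only [F1, ne_eq, Complex.ofReal_eq_zero]
  positivity

lemma F_ode2 (hα : 1 / 2 ≤ α) {x : ℝ} (hx : 0 < x) :
    -deriv (F1 α) x + ((α / x : ℝ) : ℂ) * F1 α x = Complex.I * F2 α x := by
  rw [(hasDerivAt_F1 hα hx).deriv]
  have key : -(α * x ^ (α - 1) * G α (x ^ 2) + x ^ (α + 1) * H α (x ^ 2))
      + (α / x) * (x ^ α * G α (x ^ 2)) = -(x ^ (α + 1) * H α (x ^ 2)) := by
    have r3 : α / x * x ^ α = α * x ^ (α - 1) := by
      rw [Real.rpow_sub hx, Real.rpow_one]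
      field_simp
    linear_combination G α (x ^ 2) * r3
  calc -((α * x ^ (α - 1) * G α (x ^ 2) + x ^ (α + 1) * H α (x ^ 2) : ℝ) : ℂ)
        + ((α / x : ℝ) : ℂ) * F1 α x
      = ((-(α * x ^ (α - 1) * G α (x ^ 2) + x ^ (α + 1) * H α (x ^ 2))
          + (α / x) * (x ^ α * G α (x ^ 2)) : ℝ) : ℂ) := by
        simp only [F1]; push_cast; ring
    _ = ((-(x ^ (α + 1) * H α (x ^ 2)) : ℝ) : ℂ) := by rw [key]
    _ = Complex.I * F2 α x := by
        simp only [F2]; push_cast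
        rw [← mul_assoc, Complex.I_mul_I]; ring

lemma F_ode1 (hα : 1 / 2 ≤ α) {x : ℝ} (hx : 0 < x) :
    deriv (F2 α) x + ((α / x : ℝ) : ℂ) * F2 α x = Complex.I * F1 α x := by
  rw [(hasDerivAt_F2 hα hx).deriv]
  have key : ((α + 1) * x ^ α * H α (x ^ 2) + 2 * x ^ (α + 2) * HD α (x ^ 2))
      + (α / x) * (x ^ (α + 1) * H α (x ^ 2)) = x ^ α * G α (x ^ 2) := by
    have hid := H_identity hα (x ^ 2)
    have r1 : α / x * x ^ (α + 1) = α * x ^ α := by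
      rw [Real.rpow_add_one hx.ne']
      field_simp
    have r2 : x ^ (α + 2) = x ^ α * x ^ 2 := by
      rw [show α + 2 = α + 1 + 1 by ring, Real.rpow_add_one hx.ne',
        Real.rpow_add_one hx.ne']
      ring
    rw [r2]
    linear_combination (x ^ α : ℝ) * hid + H α (x ^ 2) * r1
  calc Complex.I * (((α + 1) * x ^ α * H α (x ^ 2) + 2 * x ^ (α + 2) * HD α (x ^ 2) : ℝ) : ℂ)
        + ((α / x : ℝ) : ℂ) * F2 α x
      = Complex.I * ((((α + 1) * x ^ α * H α (x ^ 2) + 2 * x ^ (α + 2) * HD α (x ^ 2))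
          + (α / x) * (x ^ (α + 1) * H α (x ^ 2)) : ℝ) : ℂ) := by
        simp only [F2]; push_cast; ring
    _ = Complex.I * ((x ^ α * G α (x ^ 2) : ℝ) : ℂ) := by rw [key]
    _ = Complex.I * F1 α x := rfl

lemma contDiffOn_F1 (hα : 1 / 2 ≤ α) {b : ℝ} : ContDiffOn ℝ 1 (F1 α) (Ioo 0 b) := by
  intro x hx
  have hx0 : (0:ℝ) < x := hx.1
  have h1 : ContDiffAt ℝ 1 (fun y : ℝ => y ^ α) x :=
    Real.contDiffAt_rpow_const_of_ne hx0.ne'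
  have h2 : ContDiffAt ℝ 1 (fun y : ℝ => G α (y ^ 2)) x :=
    ((contDiff_G hα).comp (contDiff_id.pow 2)).contDiffAt
  have h3 : ContDiffAt ℝ 1 (fun y : ℝ => y ^ α * G α (y ^ 2)) x := h1.mul h2
  have h4 : ContDiffAt ℝ 1 (F1 α) x :=
    (Complex.ofRealCLM.contDiff.contDiffAt).comp x h3
  exact h4.contDiffWithinAt

lemma contDiffOn_F2 (hα : 1 / 2 ≤ α) {b : ℝ} : ContDiffOn ℝ 1 (F2 α) (Ioo 0 b) := by
  intro x hx
  have hx0 : (0:ℝ) < x := hx.1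
  have h1 : ContDiffAt ℝ 1 (fun y : ℝ => y ^ (α + 1)) x :=
    Real.contDiffAt_rpow_const_of_ne hx0.ne'
  have h2 : ContDiffAt ℝ 1 (fun y : ℝ => H α (y ^ 2)) x :=
    ((contDiff_H hα).comp (contDiff_id.pow 2)).contDiffAt
  have h3 : ContDiffAt ℝ 1 (fun y : ℝ => y ^ (α + 1) * H α (y ^ 2)) x := h1.mul h2
  have h4 : ContDiffAt ℝ 1 (fun y : ℝ => ((y ^ (α + 1) * H α (y ^ 2) : ℝ) : ℂ)) x :=
    (Complex.ofRealCLM.contDiff.contDiffAt).comp x h3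
  exact (contDiffAt_const.mul h4).contDiffWithinAt

lemma norm_F1 (hα : 1 / 2 ≤ α) {x : ℝ} (hx : 0 < x) : ‖F1 α x‖ = x ^ α * G α (x ^ 2) := by
  have h1 : (0:ℝ) < x ^ α := Real.rpow_pos_of_pos hx α
  have h2 : (0:ℝ) < G α (x ^ 2) := G_pos hα (by positivity)
  simp only [F1, Complex.norm_real, Real.norm_eq_abs]
  exact abs_of_pos (mul_pos h1 h2)

lemma norm_F2 (hα : 1 / 2 ≤ α) {x : ℝ} (hx : 0 < x) :
    ‖F2 α x‖ = x ^ (α + 1) * H α (x ^ 2) := by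
  have h1 : (0:ℝ) < x ^ (α + 1) := Real.rpow_pos_of_pos hx _
  have h2 : (0:ℝ) ≤ H α (x ^ 2) := H_nonneg hα (by positivity)
  simp only [F2, norm_mul, Complex.norm_I, one_mul, Complex.norm_real, Real.norm_eq_abs]
  rw [← abs_mul]
  exact abs_of_nonneg (mul_nonneg h1.le h2)

/-- upper bound `‖F x‖ ≤ M x^α` on `(0,b)` -/
lemma norm_F1_le (hα : 1 / 2 ≤ α) {b x : ℝ} (hb : 0 < b) (hx : x ∈ Ioo 0 b) :
    ‖F1 α x‖ ≤ G α (b ^ 2) * x ^ α := by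
  rw [norm_F1 hα hx.1]
  have := G_mono hα (t := x ^ 2) (T := b ^ 2) (by positivity)
    (by nlinarith [hx.1, hx.2])
  have h1 : (0:ℝ) < x ^ α := Real.rpow_pos_of_pos hx.1 α
  nlinarith [this]

lemma norm_F2_le (hα : 1 / 2 ≤ α) {b x : ℝ} (hb : 0 < b) (hx : x ∈ Ioo 0 b) :
    ‖F2 α x‖ ≤ b * H α (b ^ 2) * x ^ α := by
  rw [norm_F2 hα hx.1]
  have hH := H_mono hα (t := x ^ 2) (T := b ^ 2) (by positivity)
    (by nlinarith [hx.1, hx.2])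
  have hHx : (0:ℝ) ≤ H α (x ^ 2) := H_nonneg hα (by positivity)
  have h1 : (0:ℝ) < x ^ α := Real.rpow_pos_of_pos hx.1 α
  have e1 : x ^ (α + 1) = x ^ α * x := Real.rpow_add_one hx.1.ne' α
  rw [e1]
  have h2 : x * H α (x ^ 2) ≤ b * H α (b ^ 2) := mul_le_mul hx.2.le hH hHx hb.le
  calc x ^ α * x * H α (x ^ 2) = x ^ α * (x * H α (x ^ 2)) := by ring
    _ ≤ x ^ α * (b * H α (b ^ 2)) := mul_le_mul_of_nonneg_left h2 h1.le
    _ = b * H α (b ^ 2) * x ^ α := by ring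

lemma memDeficiency_F (hα : 1 / 2 ≤ α) {b : ℝ} (hb : 0 < b) :
    MemDeficiency α b (F1 α) (F2 α) := by
  refine ⟨contDiffOn_F1 hα, contDiffOn_F2 hα, ?_, fun x hx => ⟨F_ode1 hα hx.1, F_ode2 hα hx.1⟩⟩
  -- integrability
  set C : ℝ := (G α (b ^ 2) * b ^ α) ^ 2 + (b * H α (b ^ 2) * b ^ α) ^ 2 with hC
  have hmeas : AEStronglyMeasurable (fun x => ‖F1 α x‖ ^ 2 + ‖F2 α x‖ ^ 2)
      (volume.restrict (Ioo 0 b)) := by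
    have h1 : ContinuousOn (fun x => ‖F1 α x‖ ^ 2 + ‖F2 α x‖ ^ 2) (Ioo 0 b) := by
      have c1 := (contDiffOn_F1 hα (b := b)).continuousOn
      have c2 := (contDiffOn_F2 hα (b := b)).continuousOn
      exact ((c1.norm.pow 2).add (c2.norm.pow 2))
    exact h1.aestronglyMeasurable measurableSet_Ioo
  have hconst : IntegrableOn (fun _ : ℝ => C) (Ioo 0 b) volume := by
    exact integrableOn_const measure_Ioo_lt_top.ne
  refine Integrable.mono' hconst hmeas ?_
  rw [ae_restrict_iff' measurableSet_Ioo]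
  refine ae_of_all _ fun x hx => ?_
  have hb1 : ‖F1 α x‖ ≤ G α (b ^ 2) * x ^ α := norm_F1_le hα hb hx
  have hb2 : ‖F2 α x‖ ≤ b * H α (b ^ 2) * x ^ α := norm_F2_le hα hb hx
  have hxa : x ^ α ≤ b ^ α := Real.rpow_le_rpow hx.1.le hx.2.le (by linarith)
  have hG0 : (0:ℝ) < G α (b ^ 2) := G_pos hα (by positivity)
  have hH0 : (0:ℝ) ≤ H α (b ^ 2) := H_nonneg hα (by positivity)
  have hxa0 : (0:ℝ) ≤ x ^ α := (Real.rpow_pos_of_pos hx.1 α).le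
  have h1 : ‖F1 α x‖ ≤ G α (b ^ 2) * b ^ α := by
    calc ‖F1 α x‖ ≤ G α (b ^ 2) * x ^ α := hb1
      _ ≤ G α (b ^ 2) * b ^ α := by nlinarith
  have h2 : ‖F2 α x‖ ≤ b * H α (b ^ 2) * b ^ α := by
    calc ‖F2 α x‖ ≤ b * H α (b ^ 2) * x ^ α := hb2
      _ ≤ b * H α (b ^ 2) * b ^ α :=
          mul_le_mul_of_nonneg_left hxa (by positivity)
  have n1 : (0:ℝ) ≤ ‖F1 α x‖ := norm_nonneg _
  have n2 : (0:ℝ) ≤ ‖F2 α x‖ := norm_nonneg _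
  rw [Real.norm_eq_abs, abs_of_nonneg (by positivity)]
  rw [hC]
  nlinarith [sq_nonneg (‖F1 α x‖), sq_nonneg (‖F2 α x‖)]

lemma deriv_form1 {b : ℝ} {f₁ f₂ : ℝ → ℂ} (hf : MemDeficiency α b f₁ f₂)
    {x : ℝ} (hx : x ∈ Ioo (0:ℝ) b) :
    HasDerivAt f₁ (((α / x : ℝ) : ℂ) * f₁ x - Complex.I * f₂ x) x := by
  have hd : DifferentiableAt ℝ f₁ x :=
    (hf.1.contDiffAt (Ioo_mem_nhds hx.1 hx.2)).differentiableAt one_ne_zero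
  have h := hd.hasDerivAt
  have heq := (hf.2.2.2 x hx).2
  have : deriv f₁ x = ((α / x : ℝ) : ℂ) * f₁ x - Complex.I * f₂ x := by
    linear_combination -heq
  rwa [this] at h

lemma deriv_form2 {b : ℝ} {f₁ f₂ : ℝ → ℂ} (hf : MemDeficiency α b f₁ f₂)
    {x : ℝ} (hx : x ∈ Ioo (0:ℝ) b) :
    HasDerivAt f₂ (Complex.I * f₁ x - ((α / x : ℝ) : ℂ) * f₂ x) x := by
  have hd : DifferentiableAt ℝ f₂ x :=
    (hf.2.1.contDiffAt (Ioo_mem_nhds hx.1 hx.2)).differentiableAt one_ne_zero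
  have h := hd.hasDerivAt
  have heq := (hf.2.2.2 x hx).1
  have : deriv f₂ x = Complex.I * f₁ x - ((α / x : ℝ) : ℂ) * f₂ x := by
    linear_combination heq
  rwa [this] at h

/-- the Wronskian of two solutions has zero derivative -/
lemma wronskian_hasDerivAt {b : ℝ} {f₁ f₂ g₁ g₂ : ℝ → ℂ}
    (hf : MemDeficiency α b f₁ f₂) (hg : MemDeficiency α b g₁ g₂)
    {x : ℝ} (hx : x ∈ Ioo (0:ℝ) b) :
    HasDerivAt (fun y => f₁ y * g₂ y - f₂ y * g₁ y) 0 x := by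
  have h := ((deriv_form1 hf hx).mul (deriv_form2 hg hx)).sub
    ((deriv_form2 hf hx).mul (deriv_form1 hg hx))
  refine h.congr_deriv ?_
  ring

lemma wronskian_const {b : ℝ} {f₁ f₂ g₁ g₂ : ℝ → ℂ}
    (hb : 0 < b) (hf : MemDeficiency α b f₁ f₂) (hg : MemDeficiency α b g₁ g₂)
    {x : ℝ} (hx : x ∈ Ioo (0:ℝ) b) :
    f₁ x * g₂ x - f₂ x * g₁ x = f₁ (b/2) * g₂ (b/2) - f₂ (b/2) * g₁ (b/2) := by
  set w : ℝ → ℂ := fun y => f₁ y * g₂ y - f₂ y * g₁ y with hw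
  have hmem : ∀ {u v : ℝ}, 0 < u → v < b → Icc u v ⊆ Ioo (0:ℝ) b := by
    intro u v hu hv y hy
    exact ⟨lt_of_lt_of_le hu hy.1, lt_of_le_of_lt hy.2 hv⟩
  have hb2 : b / 2 ∈ Ioo (0:ℝ) b := ⟨by linarith, by linarith⟩
  rcases le_total x (b/2) with h | h
  · have hsub : Icc x (b/2) ⊆ Ioo (0:ℝ) b := hmem hx.1 hb2.2
    have := constant_of_has_deriv_right_zero
      (f := w) (a := x) (b := b/2)
      (fun y hy => (wronskian_hasDerivAt hf hg (hsub hy)).continuousAt.continuousWithinAt)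
      (fun y hy => (wronskian_hasDerivAt hf hg (hsub (Ico_subset_Icc_self hy))).hasDerivWithinAt)
    exact (this (b/2) ⟨h, le_rfl⟩).symm
  · have hsub : Icc (b/2) x ⊆ Ioo (0:ℝ) b := hmem hb2.1 hx.2
    have := constant_of_has_deriv_right_zero
      (f := w) (a := b/2) (b := x)
      (fun y hy => (wronskian_hasDerivAt hf hg (hsub hy)).continuousAt.continuousWithinAt)
      (fun y hy => (wronskian_hasDerivAt hf hg (hsub (Ico_subset_Icc_self hy))).hasDerivWithinAt)
    exact this x ⟨h, le_rfl⟩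

set_option maxHeartbeats 1000000 in
lemma wronskian_F_zero (hα : 1 / 2 ≤ α) {b : ℝ} (hb : 0 < b) {f₁ f₂ : ℝ → ℂ}
    (hf : MemDeficiency α b f₁ f₂) :
    F1 α (b/2) * f₂ (b/2) - F2 α (b/2) * f₁ (b/2) = 0 := by
  by_contra hc
  set c : ℂ := F1 α (b/2) * f₂ (b/2) - F2 α (b/2) * f₁ (b/2) with hcdef
  set M : ℝ := G α (b ^ 2) + b * H α (b ^ 2) with hM
  have hG0 : (0:ℝ) < G α (b ^ 2) := G_pos hα (by positivity)
  have hH0 : (0:ℝ) ≤ H α (b ^ 2) := H_nonneg hα (by positivity)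
  have hMpos : 0 < M := by rw [hM]; nlinarith
  set ε : ℝ := min b 1 with hε
  have hεpos : 0 < ε := lt_min hb one_pos
  have hsub : Ioo (0:ℝ) ε ⊆ Ioo (0:ℝ) b := Ioo_subset_Ioo_right (min_le_left b 1)
  have hcn : (0:ℝ) < ‖c‖ ^ 2 := pow_pos (norm_pos_iff.mpr hc) 2
  set S : ℝ → ℝ := fun x => ‖f₁ x‖ ^ 2 + ‖f₂ x‖ ^ 2 with hS
  have key : ∀ x ∈ Ioo (0:ℝ) ε, x⁻¹ ≤ 2 * M ^ 2 / ‖c‖ ^ 2 * S x := by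
    intro x hx
    have hxb : x ∈ Ioo (0:ℝ) b := hsub hx
    have hx0 : 0 < x := hx.1
    have hxa0 : (0:ℝ) < x ^ α := Real.rpow_pos_of_pos hx0 α
    have hw := wronskian_const hb (memDeficiency_F hα hb) hf hxb
    -- ‖c‖ ≤ M x^α (‖f₁ x‖ + ‖f₂ x‖)
    have hF1 : ‖F1 α x‖ ≤ M * x ^ α := by
      have := norm_F1_le hα hb hxb
      have hbH : (0:ℝ) ≤ b * H α (b ^ 2) := by positivity
      nlinarith
    have hF2 : ‖F2 α x‖ ≤ M * x ^ α := by
      have := norm_F2_le hα hb hxb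
      nlinarith
    have h1 : ‖c‖ ≤ M * x ^ α * (‖f₁ x‖ + ‖f₂ x‖) := by
      calc ‖c‖ = ‖F1 α x * f₂ x - F2 α x * f₁ x‖ := by rw [hw]
        _ ≤ ‖F1 α x * f₂ x‖ + ‖F2 α x * f₁ x‖ := norm_sub_le _ _
        _ = ‖F1 α x‖ * ‖f₂ x‖ + ‖F2 α x‖ * ‖f₁ x‖ := by rw [norm_mul, norm_mul]
        _ ≤ M * x ^ α * ‖f₂ x‖ + M * x ^ α * ‖f₁ x‖ := by
            have := norm_nonneg (f₁ x); have := norm_nonneg (f₂ x)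
            nlinarith
        _ = M * x ^ α * (‖f₁ x‖ + ‖f₂ x‖) := by ring
    have hxa2 : x ^ α * x ^ α ≤ x := by
      have hx1 : x ≤ 1 := le_of_lt (lt_of_lt_of_le hx.2 (min_le_right b 1))
      have h2a : x ^ (α + α) ≤ x ^ (1:ℝ) :=
        Real.rpow_le_rpow_of_exponent_ge hx0 hx1 (by linarith)
      rw [← Real.rpow_add hx0, Real.rpow_one] at *
      exact h2a
    have hSval : S x = ‖f₁ x‖ ^ 2 + ‖f₂ x‖ ^ 2 := rfl
    have h2 : ‖c‖ ^ 2 ≤ 2 * M ^ 2 * x * S x := by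
      have hN : (‖f₁ x‖ + ‖f₂ x‖) ^ 2 ≤ 2 * S x := by
        rw [hSval]; nlinarith [sq_nonneg (‖f₁ x‖ - ‖f₂ x‖)]
      have hSnn : 0 ≤ S x := by rw [hSval]; positivity
      have hMN : 0 ≤ M ^ 2 * (‖f₁ x‖ + ‖f₂ x‖) ^ 2 := by positivity
      calc ‖c‖ ^ 2 ≤ (M * x ^ α * (‖f₁ x‖ + ‖f₂ x‖)) ^ 2 := by
            have := norm_nonneg c
            nlinarith [norm_nonneg (f₁ x), norm_nonneg (f₂ x)]
        _ = (M ^ 2 * (‖f₁ x‖ + ‖f₂ x‖) ^ 2) * (x ^ α * x ^ α) := by ring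
        _ ≤ (M ^ 2 * (‖f₁ x‖ + ‖f₂ x‖) ^ 2) * x := mul_le_mul_of_nonneg_left hxa2 hMN
        _ = (M ^ 2 * x) * (‖f₁ x‖ + ‖f₂ x‖) ^ 2 := by ring
        _ ≤ (M ^ 2 * x) * (2 * S x) := by
            apply mul_le_mul_of_nonneg_left hN (by positivity)
        _ = 2 * M ^ 2 * x * S x := by ring
    rw [inv_eq_one_div, div_le_iff₀ hx0]
    calc (1:ℝ) ≤ (2 * M ^ 2 * x * S x) / ‖c‖ ^ 2 := (one_le_div hcn).mpr h2
      _ = 2 * M ^ 2 / ‖c‖ ^ 2 * S x * x := by ring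
  have hSint : IntegrableOn S (Ioo 0 ε) volume :=
    hf.2.2.1.mono_set (Ioo_subset_Ioo_right (min_le_left b 1))
  have hint : IntegrableOn (fun x : ℝ => x ^ (-1:ℝ)) (Ioo 0 ε) volume := by
    refine Integrable.mono' (hSint.const_mul (2 * M ^ 2 / ‖c‖ ^ 2)) ?_ ?_
    · refine ContinuousOn.aestronglyMeasurable ?_ measurableSet_Ioo
      intro x hx
      exact (Real.continuousAt_rpow_const x _ (Or.inl hx.1.ne')).continuousWithinAt
    · rw [ae_restrict_iff' measurableSet_Ioo]
      refine ae_of_all _ fun x hx => ?_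
      rw [Real.norm_eq_abs, Real.rpow_neg_one, abs_of_pos (inv_pos.mpr hx.1)]
      exact key x hx
  rw [intervalIntegral.integrableOn_Ioo_rpow_iff hεpos] at hint
  norm_num at hint

set_option maxHeartbeats 1000000 in
lemma proportional (hα : 1 / 2 ≤ α) {b : ℝ} (hb : 0 < b) {f₁ f₂ : ℝ → ℂ}
    (hf : MemDeficiency α b f₁ f₂) :
    ∃ μ : ℂ, ∀ x ∈ Ioo (0:ℝ) b, f₁ x = μ * F1 α x ∧ f₂ x = μ * F2 α x := by
  have hb2 : b / 2 ∈ Ioo (0:ℝ) b := ⟨by linarith, by linarith⟩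
  have hF := memDeficiency_F hα hb
  have hFne : F1 α (b/2) ≠ 0 := F1_ne_zero hα hb2.1
  have hw0 := wronskian_F_zero hα hb hf
  set μ : ℂ := f₁ (b/2) / F1 α (b/2) with hμ
  have h1 : f₁ (b/2) = μ * F1 α (b/2) := by
    rw [hμ]; field_simp
  have h2 : f₂ (b/2) = μ * F2 α (b/2) := by
    have he : F1 α (b/2) * f₂ (b/2) = F1 α (b/2) * (μ * F2 α (b/2)) := by
      have : F1 α (b/2) * f₂ (b/2) = F2 α (b/2) * f₁ (b/2) := by
        linear_combination hw0
      rw [this, h1]; ring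
    exact mul_left_cancel₀ hFne he
  refine ⟨μ, fun x hx => ?_⟩
  -- ODE uniqueness on a compact subinterval around x and b/2
  set x₀ : ℝ := b / 2 with hx₀
  set a' : ℝ := min x x₀ / 2 with ha'
  set b' : ℝ := (max x x₀ + b) / 2 with hb'
  have hmin : 0 < min x x₀ := lt_min hx.1 hb2.1
  have ha'0 : 0 < a' := by rw [ha']; linarith
  have ha'x : a' < x := by
    have : min x x₀ ≤ x := min_le_left _ _
    rw [ha']; linarith
  have ha'x₀ : a' < x₀ := by
    have : min x x₀ ≤ x₀ := min_le_right _ _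
    rw [ha']; linarith
  have hmax : max x x₀ < b := max_lt hx.2 hb2.2
  have hxb' : x < b' := by
    have : x ≤ max x x₀ := le_max_left _ _
    rw [hb']; linarith
  have hx₀b' : x₀ < b' := by
    have : x₀ ≤ max x x₀ := le_max_right _ _
    rw [hb']; linarith
  have hb'b : b' < b := by rw [hb']; linarith
  have hsub : Ioo a' b' ⊆ Ioo (0:ℝ) b :=
    fun y hy => ⟨lt_trans ha'0 hy.1, lt_trans hy.2 hb'b⟩
  set K : NNReal := Real.toNNReal (|α| / a' + 1) with hK
  have hKcoe : (K : ℝ) = |α| / a' + 1 := Real.coe_toNNReal _ (by positivity)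
  set v : ℝ → ℂ × ℂ → ℂ × ℂ := fun t y =>
    (((α / t : ℝ) : ℂ) * y.1 - Complex.I * y.2,
     Complex.I * y.1 - ((α / t : ℝ) : ℂ) * y.2) with hv
  set s : ℝ → Set (ℂ × ℂ) := fun t => if t ∈ Icc a' b' then univ else ∅ with hs
  have hlip : ∀ t, LipschitzOnWith K (v t) (s t) := by
    intro t
    by_cases ht : t ∈ Icc a' b'
    · rw [hs]
      simp only [if_pos ht]
      rw [lipschitzOnWith_univ]
      apply LipschitzWith.of_dist_le_mul
      intro y z
      have hta : a' ≤ t := ht.1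
      have ht0 : 0 < t := lt_of_lt_of_le ha'0 hta
      have hcoef : ‖((α / t : ℝ) : ℂ)‖ ≤ |α| / a' := by
        rw [Complex.norm_real, Real.norm_eq_abs, abs_div, abs_of_pos ht0]
        exact div_le_div_of_nonneg_left (abs_nonneg α) ha'0 hta
      have hd1 : dist y.1 z.1 ≤ dist y z := le_max_left _ _
      have hd2 : dist y.2 z.2 ≤ dist y z := le_max_right _ _
      rw [Prod.dist_eq]
      rw [hKcoe]
      have hdn : 0 ≤ dist y z := dist_nonneg
      have hcn : 0 ≤ ‖((α / t : ℝ) : ℂ)‖ := norm_nonneg _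
      have e1 : dist (v t y).1 (v t z).1 ≤ (|α| / a' + 1) * dist y z := by
        rw [hv]
        simp only [Complex.dist_eq]
        calc ‖(((α / t : ℝ) : ℂ) * y.1 - Complex.I * y.2) -
              (((α / t : ℝ) : ℂ) * z.1 - Complex.I * z.2)‖
            = ‖((α / t : ℝ) : ℂ) * (y.1 - z.1) - Complex.I * (y.2 - z.2)‖ := by
              ring_nf
          _ ≤ ‖((α / t : ℝ) : ℂ) * (y.1 - z.1)‖
              + ‖Complex.I * (y.2 - z.2)‖ := by
              apply norm_sub_le
          _ = ‖((α / t : ℝ) : ℂ)‖ * dist y.1 z.1 + dist y.2 z.2 := by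
              simp [norm_mul, Complex.dist_eq]
          _ ≤ (|α| / a') * dist y z + dist y z := by
              have := mul_le_mul hcoef hd1 dist_nonneg (by positivity)
              have h2 := hd2
              have hm : ‖((α / t : ℝ) : ℂ)‖ * dist y.1 z.1 ≤ |α| / a' * dist y z := this
              linarith
          _ = (|α| / a' + 1) * dist y z := by ring
      have e2 : dist (v t y).2 (v t z).2 ≤ (|α| / a' + 1) * dist y z := by
        rw [hv]
        simp only [Complex.dist_eq]
        calc ‖(Complex.I * y.1 - ((α / t : ℝ) : ℂ) * y.2) -
              (Complex.I * z.1 - ((α / t : ℝ) : ℂ) * z.2)‖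
            = ‖Complex.I * (y.1 - z.1) - ((α / t : ℝ) : ℂ) * (y.2 - z.2)‖ := by
              ring_nf
          _ ≤ ‖Complex.I * (y.1 - z.1)‖
              + ‖((α / t : ℝ) : ℂ) * (y.2 - z.2)‖ := by
              apply norm_sub_le
          _ = dist y.1 z.1 + ‖((α / t : ℝ) : ℂ)‖ * dist y.2 z.2 := by
              simp [norm_mul, Complex.dist_eq]
          _ ≤ dist y z + (|α| / a') * dist y z := by
              have hm : ‖((α / t : ℝ) : ℂ)‖ * dist y.2 z.2 ≤ |α| / a' * dist y z :=
                mul_le_mul hcoef hd2 dist_nonneg (by positivity)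
              linarith
          _ = (|α| / a' + 1) * dist y z := by ring
      exact max_le e1 e2
    · rw [hs]
      simp only [if_neg ht]
      exact lipschitzOnWith_empty K _
  have hmem_s : ∀ t ∈ Ioo a' b', ∀ y : ℂ × ℂ, y ∈ s t := by
    intro t ht y
    rw [hs]
    simp only [if_pos (Ioo_subset_Icc_self ht)]
    trivial
  have hfsol : ∀ t ∈ Ioo a' b',
      HasDerivAt (fun y => (f₁ y, f₂ y)) (v t (f₁ t, f₂ t)) t ∧ (f₁ t, f₂ t) ∈ s t := by
    intro t ht
    refine ⟨?_, hmem_s t ht _⟩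
    exact (deriv_form1 hf (hsub ht)).prodMk (deriv_form2 hf (hsub ht))
  have hgsol : ∀ t ∈ Ioo a' b',
      HasDerivAt (fun y => (μ * F1 α y, μ * F2 α y)) (v t (μ * F1 α t, μ * F2 α t)) t
        ∧ (μ * F1 α t, μ * F2 α t) ∈ s t := by
    intro t ht
    refine ⟨?_, hmem_s t ht _⟩
    have hd1 := ((deriv_form1 hF (hsub ht)).const_mul μ).congr_deriv
      (show μ * (((α / t : ℝ) : ℂ) * F1 α t - Complex.I * F2 α t)
        = ((α / t : ℝ) : ℂ) * (μ * F1 α t) - Complex.I * (μ * F2 α t) by ring)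
    have hd2 := ((deriv_form2 hF (hsub ht)).const_mul μ).congr_deriv
      (show μ * (Complex.I * F1 α t - ((α / t : ℝ) : ℂ) * F2 α t)
        = Complex.I * (μ * F1 α t) - ((α / t : ℝ) : ℂ) * (μ * F2 α t) by ring)
    exact hd1.prodMk hd2
  have heq0 : (fun y => (f₁ y, f₂ y)) x₀ = (fun y => (μ * F1 α y, μ * F2 α y)) x₀ := by
    simp only [Prod.mk.injEq]
    exact ⟨h1, h2⟩
  have huniq := ODE_solution_unique_of_mem_Ioo (fun t _ => hlip t) ⟨ha'x₀, hx₀b'⟩ hfsol hgsol heq0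
  have hx' : x ∈ Ioo a' b' := ⟨ha'x, hxb'⟩
  have := huniq hx'
  simp only [Prod.mk.injEq] at this
  exact this

lemma conj_hasDerivAt {f : ℝ → ℂ} {f' : ℂ} {x : ℝ} (hf : HasDerivAt f f' x) :
    HasDerivAt (fun y => (starRingEnd ℂ) (f y)) ((starRingEnd ℂ) f') x :=
  (Complex.conjCLE.toContinuousLinearMap.hasFDerivAt (x := f x)).comp_hasDerivAt x hf

lemma mirror {α₀ b : ℝ} {f₁ f₂ : ℝ → ℂ} (h : MemDeficiency α₀ b f₁ f₂) :
    MemDeficiency (-α₀) b (fun x => (starRingEnd ℂ) (f₂ x))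
      (fun x => (starRingEnd ℂ) (f₁ x)) := by
  obtain ⟨hc1, hc2, hint, hode⟩ := h
  have hconj : ContDiff ℝ 1 (fun z : ℂ => (starRingEnd ℂ) z) :=
    Complex.conjCLE.toContinuousLinearMap.contDiff
  refine ⟨hconj.comp_contDiffOn hc2, hconj.comp_contDiffOn hc1, ?_, ?_⟩
  · refine (hint.congr_fun (fun x _ => ?_) measurableSet_Ioo : _)
    simp only [RCLike.norm_conj]
    ring
  · intro x hx
    have hd1 : DifferentiableAt ℝ f₁ x :=
      (hc1.contDiffAt (Ioo_mem_nhds hx.1 hx.2)).differentiableAt one_ne_zero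
    have hd2 : DifferentiableAt ℝ f₂ x :=
      (hc2.contDiffAt (Ioo_mem_nhds hx.1 hx.2)).differentiableAt one_ne_zero
    have hD1 : deriv (fun y => (starRingEnd ℂ) (f₁ y)) x = (starRingEnd ℂ) (deriv f₁ x) :=
      (conj_hasDerivAt hd1.hasDerivAt).deriv
    have hD2 : deriv (fun y => (starRingEnd ℂ) (f₂ y)) x = (starRingEnd ℂ) (deriv f₂ x) :=
      (conj_hasDerivAt hd2.hasDerivAt).deriv
    obtain ⟨he1, he2⟩ := hode x hx
    have hce1 := congrArg (starRingEnd ℂ) he1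
    have hce2 := congrArg (starRingEnd ℂ) he2
    simp only [map_add, map_mul, map_neg, Complex.conj_ofReal, Complex.conj_I] at hce1 hce2
    push_cast at hce1 hce2
    constructor
    · rw [hD1]
      push_cast
      linear_combination -hce2
    · rw [hD2]
      push_cast
      linear_combination -hce1

lemma master (α : ℝ) (hα : 1 / 2 ≤ |α|) {b : ℝ} (hb : 0 < b) :
    ∃ P₁ P₂ : ℝ → ℂ, MemDeficiency α b P₁ P₂
      ∧ (∀ x ∈ Ioo (0:ℝ) b, P₁ x ≠ 0 ∨ P₂ x ≠ 0)
      ∧ ∀ f₁ f₂ : ℝ → ℂ, MemDeficiency α b f₁ f₂ →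
          ∃ μ : ℂ, ∀ x ∈ Ioo (0:ℝ) b, f₁ x = μ * P₁ x ∧ f₂ x = μ * P₂ x := by
  rcases le_or_gt 0 α with h0 | h0
  · have hα' : 1 / 2 ≤ α := by rwa [abs_of_nonneg h0] at hα
    refine ⟨F1 α, F2 α, memDeficiency_F hα' hb,
      fun x hx => Or.inl (F1_ne_zero hα' hx.1), fun f₁ f₂ hf => ?_⟩
    obtain ⟨μ, hμ⟩ := proportional hα' hb hf
    exact ⟨μ, hμ⟩
  · set β : ℝ := -α with hβdef
    have hβ : 1 / 2 ≤ β := by rwa [abs_of_neg h0] at hα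
    have hmem : MemDeficiency α b (fun x => (starRingEnd ℂ) (F2 β x))
        (fun x => (starRingEnd ℂ) (F1 β x)) := by
      have := mirror (memDeficiency_F hβ hb)
      rwa [show -β = α by rw [hβdef]; ring] at this
    refine ⟨_, _, hmem, fun x hx => Or.inr ?_, fun f₁ f₂ hf => ?_⟩
    · simp only [ne_eq, map_eq_zero]
      exact F1_ne_zero hβ hx.1
    · have hmf : MemDeficiency β b (fun x => (starRingEnd ℂ) (f₂ x))
          (fun x => (starRingEnd ℂ) (f₁ x)) := by
        have := mirror hf
        rwa [show -α = β by rw [hβdef]] at this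
      obtain ⟨μ, hμ⟩ := proportional hβ hb hmf
      refine ⟨(starRingEnd ℂ) μ, fun x hx => ?_⟩
      obtain ⟨e1, e2⟩ := hμ x hx
      have c2 := congrArg (starRingEnd ℂ) e2
      have c1 := congrArg (starRingEnd ℂ) e1
      simp only [Complex.conj_conj, map_mul] at c1 c2
      exact ⟨c2, c1⟩

end DefAux

/-- One-dimensionality of the deficiency space on a bounded interval for `|α| ≥ 1/2`
(core of Proposition 3.4 (i)): the deficiency space `S` contains a nonzero element, and any
two elements of `S` are linearly dependent over `ℂ`. -/
theorem deficiency_one_dimensional_interval (α : ℝ) (hα : 1 / 2 ≤ |α|)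
    (b : ℝ) (hb : 0 < b) :
    (∃ f₁ f₂ : ℝ → ℂ, MemDeficiency α b f₁ f₂ ∧ ∃ x ∈ Ioo (0 : ℝ) b, (f₁ x ≠ 0 ∨ f₂ x ≠ 0))
    ∧ ∀ f₁ f₂ g₁ g₂ : ℝ → ℂ, MemDeficiency α b f₁ f₂ → MemDeficiency α b g₁ g₂ →
        ∃ c d : ℂ, ¬(c = 0 ∧ d = 0) ∧
          ∀ x ∈ Ioo (0 : ℝ) b, c * f₁ x + d * g₁ x = 0 ∧ c * f₂ x + d * g₂ x = 0 := by
  obtain ⟨P₁, P₂, hP, hPne, hprop⟩ := DefAux.master α hα hb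
  have hb2 : b / 2 ∈ Ioo (0:ℝ) b := ⟨by linarith, by linarith⟩
  constructor
  · exact ⟨P₁, P₂, hP, b / 2, hb2, hPne _ hb2⟩
  · intro f₁ f₂ g₁ g₂ hf hg
    obtain ⟨μ, hμ⟩ := hprop f₁ f₂ hf
    obtain ⟨ν, hν⟩ := hprop g₁ g₂ hg
    by_cases hμ0 : μ = 0
    · refine ⟨1, 0, by simp, fun x hx => ?_⟩
      obtain ⟨e1, e2⟩ := hμ x hx
      rw [hμ0, zero_mul] at e1 e2
      simp [e1, e2]
    · refine ⟨ν, -μ, fun hcd => hμ0 (by simpa using hcd.2), fun x hx => ?_⟩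
      obtain ⟨e1, e2⟩ := hμ x hx
      obtain ⟨e3, e4⟩ := hν x hx
      constructor
      · rw [e1, e3]; ring
      · rw [e2, e4]; ring

end
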